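/- For all integers x, t with t > |x| and x + t even: a₁(xε, tε, m, ε) = (1+m²ε²)^{(1−t)/2} · Σ_{r=0}^{(t−|x|)/2} (−1)^r · C((x+t−2)/2, r) · C((t−x−2)/2, r) · (mε)^{2r+1}, and a₂(xε, tε, m, ε) = (1+m²ε²)^{(1−t)/2} · Σ_{r=1}^{(t−|x|)/2} (−1)^r · C((x+t−2)/2, r) · C((t−x−2)/2, r−1) · (mε)^{2r}, where C(n,k) denotes the binomial coefficient. -/
import Mathlib


open scoped BigOperators

/-- The final x-coordinate of a checker path from `(0,0)` encoded by its sequence of moves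
(`true` = move `(1,1)`, `false` = move `(-1,1)`). -/
def moveEndpoint {n : ℕ} (d : Fin n → Bool) : ℤ :=
  ∑ k, (if d k then (1 : ℤ) else -1)

/-- The number of turns of a checker path encoded by its sequence of moves. -/
def nturns {n : ℕ} (d : Fin n → Bool) : ℕ :=
  ((List.ofFn d).zip (List.ofFn d).tail).countP fun p => p.1 != p.2

/-- Checker paths from `(0,0)` to `(x,t)` whose first step is to `(1,1)`,
encoded by their sequences of moves. -/
def cpaths (x t : ℤ) : Finset (Fin t.toNat → Bool) :=
  Finset.univ.filter fun d => moveEndpoint d = x ∧ (List.ofFn d).headI = true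

/-- Feynman checkers amplitude with mass: `a(x·ε, t·ε, m, ε)` written in lattice
coordinates, i.e. `am m ε x t = (1+m²ε²)^((1-t)/2) * i * ∑ₛ (-i·m·ε)^turns(s)`. -/
noncomputable def am (m ε : ℝ) (x t : ℤ) : ℂ :=
  (Real.sqrt (1 + m ^ 2 * ε ^ 2) : ℂ) ^ (1 - t) * Complex.I *
    ∑ d ∈ cpaths x t, (-Complex.I * (m * ε)) ^ nturns d

def lturns (l : List Bool) : ℕ := (l.zip l.tail).countP fun p => p.1 != p.2

lemma nturns_eq {n : ℕ} (d : Fin n → Bool) : nturns d = lturns (List.ofFn d) := rfl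

lemma lturns_nil : lturns [] = 0 := rfl
lemma lturns_singleton (a : Bool) : lturns [a] = 0 := rfl

lemma lturns_cons_cons (a b : Bool) (l : List Bool) :
    lturns (a :: b :: l) = (if a != b then 1 else 0) + lturns (b :: l) := by
  simp only [lturns, List.tail_cons, List.zip_cons_cons, List.countP_cons]
  by_cases h : (a != b) = true <;> simp [h, add_comm]

lemma lturns_append_singleton (l : List Bool) (c : Bool) :
    lturns (l ++ [c]) = lturns l + (if l.getLastD c != c then 1 else 0) := by
  induction l with
  | nil => simp [lturns]
  | cons a l ih =>
    cases l with
    | nil =>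
      simp only [List.nil_append, List.cons_append, lturns_cons_cons, lturns_singleton,
        List.getLastD_cons, List.getLastD_nil, lturns_nil]
      omega
    | cons b l' =>
      simp only [List.cons_append] at ih ⊢
      rw [lturns_cons_cons, ih, lturns_cons_cons]
      simp only [List.getLastD_cons]
      ring

lemma ofFn_snoc' {n : ℕ} (e : Fin n → Bool) (c : Bool) :
    List.ofFn (Fin.snoc e c : Fin (n+1) → Bool) = List.ofFn e ++ [c] := by
  rw [List.ofFn_succ']
  simp [List.concat_eq_append]

lemma getLastD_ofFn {n : ℕ} (e : Fin (n+1) → Bool) (d : Bool) :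
    (List.ofFn e).getLastD d = e (Fin.last n) := by
  rw [List.ofFn_succ', List.concat_eq_append]
  simp

lemma nturns_snoc {n : ℕ} (e : Fin (n+1) → Bool) (c : Bool) :
    nturns (Fin.snoc e c : Fin (n+2) → Bool)
      = nturns e + (if e (Fin.last n) != c then 1 else 0) := by
  rw [nturns_eq, nturns_eq, ofFn_snoc', lturns_append_singleton, getLastD_ofFn]

lemma moveEndpoint_snoc {n : ℕ} (e : Fin n → Bool) (c : Bool) :
    moveEndpoint (Fin.snoc e c : Fin (n+1) → Bool)
      = moveEndpoint e + (if c then 1 else -1) := by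
  simp [moveEndpoint, Fin.sum_univ_castSucc]

lemma headI_ofFn {n : ℕ} (e : Fin (n+1) → Bool) : (List.ofFn e).headI = e 0 := by
  rw [List.ofFn_succ]; rfl

noncomputable def g (n : ℕ) (x : ℤ) (b : Bool) (z : ℂ) : ℂ :=
  ∑ d : Fin (n+1) → Bool,
    if moveEndpoint d = x ∧ d 0 = true ∧ d (Fin.last n) = b then z ^ nturns d else 0

def snocEquiv (n : ℕ) : ((Fin (n+1) → Bool) × Bool) ≃ (Fin (n+2) → Bool) where
  toFun ec := Fin.snoc ec.1 ec.2
  invFun d := (fun i => d i.castSucc, d (Fin.last (n+1)))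
  left_inv ec := by simp
  right_inv d := Fin.snoc_init_self d

lemma g_succ (n : ℕ) (x : ℤ) (b : Bool) (z : ℂ) :
    g (n+1) x b z = g n (x - (if b then 1 else -1)) b z
      + z * g n (x - (if b then 1 else -1)) (!b) z := by
  rw [g, ← Equiv.sum_comp (snocEquiv n), Fintype.sum_prod_type]
  have hzero : ∀ e : Fin (n+1) → Bool, (Fin.snoc e b : Fin (n+2) → Bool) 0 = e 0 := by
    intro e
    have : (0 : Fin (n+2)) = Fin.castSucc 0 := rfl
    rw [this, Fin.snoc_castSucc]
  have key : ∀ e : Fin (n+1) → Bool, ∀ c : Bool,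
      (if moveEndpoint (snocEquiv n (e, c)) = x ∧ (snocEquiv n (e, c)) 0 = true ∧
          (snocEquiv n (e, c)) (Fin.last (n+1)) = b
        then z ^ nturns (snocEquiv n (e, c)) else 0)
      = (if c = b then
          (if moveEndpoint e = x - (if b then 1 else -1) ∧ e 0 = true ∧ e (Fin.last n) = b
            then z ^ nturns e else 0)
          + z * (if moveEndpoint e = x - (if b then 1 else -1) ∧ e 0 = true ∧
              e (Fin.last n) = !b then z ^ nturns e else 0)
        else 0) := by
    intro e c
    show (if moveEndpoint (Fin.snoc e c) = x ∧ (Fin.snoc e c : Fin (n+2) → Bool) 0 = true ∧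
          (Fin.snoc e c : Fin (n+2) → Bool) (Fin.last (n+1)) = b
        then z ^ nturns (Fin.snoc e c) else 0) = _
    rw [moveEndpoint_snoc, nturns_snoc, Fin.snoc_last]
    have h0 : (Fin.snoc e c : Fin (n+2) → Bool) 0 = e 0 := by
      have : (0 : Fin (n+2)) = Fin.castSucc 0 := rfl
      rw [this, Fin.snoc_castSucc]
    rw [h0]
    by_cases hc : c = b
    · subst hc
      simp only [if_pos rfl]
      by_cases he : moveEndpoint e = x - (if c then 1 else -1) ∧ e 0 = true
      · rcases he with ⟨h1, h2⟩
        have hme : moveEndpoint e + (if c then 1 else -1) = x := by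
          cases c
          · rw [if_neg (by simp)] at h1 ⊢; omega
          · rw [if_pos rfl] at h1 ⊢; omega
        by_cases hl : e (Fin.last n) = c
        · simp [hme, h1, h2, hl]
        · have hl' : e (Fin.last n) = !c := by
            cases c <;> revert hl <;> cases h : e (Fin.last n) <;> simp
          simp [hme, h1, h2, hl', pow_succ, mul_comm, fun b => (Bool.not_ne_self b).symm]
      · have hme : ¬ (moveEndpoint e + (if c then 1 else -1) = x) ∨ ¬ (e 0 = true) := by
          by_cases h2 : e 0 = true
          · left
            intro h
            refine he ⟨?_, h2⟩
            cases c
            · rw [if_neg (by simp)] at h ⊢; omega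
            · rw [if_pos rfl] at h ⊢; omega
          · right; exact h2
        rw [if_neg (by tauto), if_pos True.intro, if_neg (by tauto), if_neg (by tauto)]
        simp
    · rw [if_neg hc, if_neg (by tauto)]
  simp only [key]
  rw [Finset.sum_congr rfl (fun e _ => Finset.sum_ite_eq' Finset.univ b _)]
  simp only [Finset.mem_univ, if_true]
  rw [Finset.sum_add_distrib, ← Finset.mul_sum]
  rfl

lemma nturns_one (d : Fin 1 → Bool) : nturns d = 0 := by
  rw [nturns_eq]
  simp [List.ofFn_succ, lturns]

lemma g_zero (x : ℤ) (b : Bool) (z : ℂ) :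
    g 0 x b z = if x = 1 ∧ b = true then 1 else 0 := by
  rw [g, ← Equiv.sum_comp (Equiv.funUnique (Fin 1) Bool).symm, Fintype.sum_bool]
  have h1 : ∀ c : Bool, ((Equiv.funUnique (Fin 1) Bool).symm c : Fin 1 → Bool) = fun _ => c :=
    fun c => rfl
  simp only [h1]
  have hme : ∀ c : Bool, moveEndpoint (fun _ : Fin 1 => c) = if c then 1 else -1 := by
    intro c; simp [moveEndpoint]
  rw [nturns_one, nturns_one, hme, hme]
  by_cases hb : b = true <;> by_cases hx : x = 1 <;>
    simp [hb, hx] <;> omega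

lemma abs_moveEndpoint_le {n : ℕ} (d : Fin n → Bool) : |moveEndpoint d| ≤ n := by
  calc |moveEndpoint d| ≤ ∑ k : Fin n, |if d k then (1:ℤ) else -1| :=
        Finset.abs_sum_le_sum_abs _ _
    _ = ∑ _k : Fin n, (1:ℤ) := Finset.sum_congr rfl (fun k _ => by cases h : d k <;> simp [h])
    _ = n := by simp

lemma g_vanish (n : ℕ) (x : ℤ) (b : Bool) (z : ℂ) (h : (n:ℤ) + 1 < |x|) :
    g n x b z = 0 := by
  rw [g]
  apply Finset.sum_eq_zero
  intro d _
  rw [if_neg]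
  rintro ⟨h1, -, -⟩
  have := abs_moveEndpoint_le d
  rw [h1] at this
  push_cast at this
  omega

lemma sum_cpaths_eq (n : ℕ) (x : ℤ) (z : ℂ) :
    ∑ d ∈ cpaths x ((n+1 : ℕ) : ℤ), z ^ nturns d = g n x true z + g n x false z := by
  show (∑ d ∈ Finset.univ.filter
      (fun d : Fin (n+1) → Bool => moveEndpoint d = x ∧ (List.ofFn d).headI = true),
      z ^ nturns d) = _
  rw [show Finset.univ.filter
        (fun d : Fin (n+1) → Bool => moveEndpoint d = x ∧ (List.ofFn d).headI = true)
      = Finset.univ.filter (fun d : Fin (n+1) → Bool => moveEndpoint d = x ∧ d 0 = true) by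
    apply Finset.filter_congr
    intro d _
    rw [headI_ofFn]]
  rw [Finset.sum_filter, g, g, ← Finset.sum_add_distrib]
  apply Finset.sum_congr rfl
  intro d _
  by_cases h1 : moveEndpoint d = x ∧ d 0 = true
  · cases hl : d (Fin.last n) <;> simp [h1.1, h1.2, hl]
  · rw [if_neg h1, if_neg (by tauto), if_neg (by tauto)]
    simp

noncomputable def Asum (p q : ℕ) (z : ℂ) : ℂ :=
  ∑ r ∈ Finset.range (p+q), ((p-1).choose r : ℂ) * ((q-1).choose r : ℂ) * z ^ (2*r+1)

noncomputable def Bsum (p q : ℕ) (z : ℂ) : ℂ :=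
  ∑ r ∈ Finset.range (p+q), ((p-1).choose (r+1) : ℂ) * ((q-1).choose r : ℂ) * z ^ (2*r+2)

lemma Bsum_id (P q : ℕ) (z : ℂ) :
    Bsum (P+2) q z = Bsum (P+1) q z + z * Asum (P+1) q z := by
  rw [Bsum, Bsum, Asum, Finset.mul_sum]
  simp only [show P+2-1 = P+1 from rfl, show P+1-1 = P from rfl]
  rw [show P + 2 + q = (P + 1 + q) + 1 by omega, Finset.sum_range_succ,
      Nat.choose_eq_zero_of_lt (by omega : P + 1 < P + 1 + q + 1)]
  simp only [Nat.cast_zero, zero_mul, add_zero]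
  rw [← Finset.sum_add_distrib]
  apply Finset.sum_congr rfl
  intro r _
  rw [Nat.choose_succ_succ' P r]
  push_cast
  ring

lemma Asum_id (P Q : ℕ) (z : ℂ) :
    Asum (P+1) (Q+2) z = Asum (P+1) (Q+1) z + z * Bsum (P+1) (Q+1) z := by
  rw [Asum, Asum, Bsum, Finset.mul_sum]
  simp only [show P+1-1 = P from rfl, show Q+2-1 = Q+1 from rfl, show Q+1-1 = Q from rfl]
  set f : ℕ → ℂ := fun r =>
    (P.choose r : ℂ) * (if r = 0 then 0 else (Q.choose (r-1) : ℂ)) * z ^ (2*r+1) with hf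
  have h2 : ∀ r, z * ((P.choose (r+1) : ℂ) * (Q.choose r : ℂ) * z ^ (2*r+2)) = f (r+1) := by
    intro r
    simp only [hf, Nat.add_sub_cancel, if_neg (Nat.succ_ne_zero r)]
    ring
  rw [Finset.sum_congr rfl (fun r _ => h2 r)]
  have h3 : ∑ r ∈ Finset.range (P + 1 + (Q + 1)), f (r+1)
      = ∑ r ∈ Finset.range (P + 1 + (Q + 2)), f r := by
    rw [show P + 1 + (Q + 2) = (P + 1 + (Q + 1)) + 1 by omega, Finset.sum_range_succ']
    simp [hf]
  rw [h3]
  have h4 : ∑ r ∈ Finset.range (P + 1 + (Q + 1)), (P.choose r : ℂ) * (Q.choose r : ℂ) * z^(2*r+1)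
      = ∑ r ∈ Finset.range (P + 1 + (Q + 2)), (P.choose r : ℂ) * (Q.choose r : ℂ) * z^(2*r+1) := by
    rw [show P + 1 + (Q + 2) = (P + 1 + (Q + 1)) + 1 by omega, Finset.sum_range_succ,
        Nat.choose_eq_zero_of_lt (by omega : P < P + 1 + (Q + 1))]
    simp
  rw [h4, ← Finset.sum_add_distrib]
  apply Finset.sum_congr rfl
  intro r _
  rcases Nat.eq_zero_or_pos r with hr | hr
  · subst hr
    simp [hf]
  · obtain ⟨s, rfl⟩ := Nat.exists_eq_add_of_le hr
    simp only [hf, if_neg (by omega : ¬ (1 + s = 0)), show (1:ℕ) + s - 1 = s from by omega,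
      show Nat.succ 0 + s = s + 1 from by omega]
    rw [Nat.choose_succ_succ' Q s]
    push_cast
    ring


lemma g_closed (n : ℕ) : ∀ (p q : ℕ), p + q = n + 1 → ∀ z : ℂ,
    g n ((p:ℤ) - q) true z = (if p = 0 then 0 else if q = 0 then 1 else Bsum p q z)
    ∧ g n ((p:ℤ) - q) false z = (if p = 0 ∨ q = 0 then 0 else Asum p q z) := by
  induction n with
  | zero =>
    intro p q hpq z
    rcases (by omega : p = 0 ∧ q = 1 ∨ p = 1 ∧ q = 0) with ⟨rfl, rfl⟩ | ⟨rfl, rfl⟩ <;>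
      simp [g_zero]
  | succ n ih =>
    intro p q hpq z
    constructor
    · rw [g_succ]
      simp only [if_true, Bool.not_true]
      rcases Nat.eq_zero_or_pos p with hp | hp
      · subst hp
        have habs : (n:ℤ) + 1 < |((0:ℕ):ℤ) - (q:ℕ) - 1| := by
          rw [show ((0:ℕ):ℤ) - (q:ℕ) - 1 = -((q:ℤ)+1) by push_cast; ring, abs_neg,
            abs_of_nonneg (by positivity)]
          omega
        rw [g_vanish _ _ _ _ habs, g_vanish _ _ _ _ habs]
        simp
      · obtain ⟨P1, rfl⟩ : ∃ k, p = k + 1 := ⟨p - 1, by omega⟩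
        rw [show ((P1 + 1 : ℕ) : ℤ) - q - 1 = ((P1 : ℕ) : ℤ) - q by push_cast; ring]
        obtain ⟨h1, h2⟩ := ih P1 q (by omega) z
        rw [h1, h2, if_neg (Nat.succ_ne_zero P1)]
        rcases Nat.eq_zero_or_pos q with hq | hq
        · subst hq
          have hP1 : ¬ (P1 = 0) := by omega
          rw [if_neg hP1, if_pos rfl, if_pos (Or.inr rfl), if_pos rfl, mul_zero, add_zero]
        · obtain ⟨Q1, rfl⟩ : ∃ k, q = k + 1 := ⟨q - 1, by omega⟩
          rw [if_neg (Nat.succ_ne_zero Q1), if_neg (Nat.succ_ne_zero Q1)]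
          rcases Nat.eq_zero_or_pos P1 with hP1 | hP1
          · subst hP1
            rw [if_pos rfl, if_pos (Or.inl rfl), mul_zero, add_zero]
            symm
            rw [Bsum]
            apply Finset.sum_eq_zero
            intro r _
            rw [show (0:ℕ) + 1 - 1 = 0 by omega, Nat.choose_eq_zero_of_lt (by omega)]
            simp
          · obtain ⟨P2, rfl⟩ : ∃ k, P1 = k + 1 := ⟨P1 - 1, by omega⟩
            rw [if_neg (Nat.succ_ne_zero P2), if_neg (by simp : ¬ (P2 + 1 = 0 ∨ Q1 + 1 = 0)),
              show P2 + 1 + 1 = P2 + 2 by omega]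
            exact (Bsum_id P2 (Q1 + 1) z).symm
    · rw [g_succ]
      simp only [Bool.not_false, if_neg (Bool.false_ne_true)]
      rcases Nat.eq_zero_or_pos q with hq | hq
      · subst hq
        have habs : (n:ℤ) + 1 < |((p:ℕ):ℤ) - ((0:ℕ):ℤ) - (-1)| := by
          rw [show ((p:ℕ):ℤ) - ((0:ℕ):ℤ) - (-1) = (p:ℤ)+1 by push_cast; ring,
            abs_of_nonneg (by positivity)]
          omega
        rw [g_vanish _ _ _ _ habs, g_vanish _ _ _ _ habs]
        simp
      · obtain ⟨Q1, rfl⟩ : ∃ k, q = k + 1 := ⟨q - 1, by omega⟩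
        rw [show ((p : ℕ) : ℤ) - ((Q1 + 1 : ℕ) : ℤ) - (-1) = ((p : ℕ) : ℤ) - ((Q1 : ℕ) : ℤ)
          by push_cast; ring]
        obtain ⟨h1, h2⟩ := ih p Q1 (by omega) z
        rw [h1, h2]
        rcases Nat.eq_zero_or_pos p with hp | hp
        · subst hp
          simp
        · obtain ⟨P1, rfl⟩ : ∃ k, p = k + 1 := ⟨p - 1, by omega⟩
          rw [if_neg (by simp : ¬ (P1 + 1 = 0 ∨ Q1 + 1 = 0)), if_neg (Nat.succ_ne_zero P1)]
          rcases Nat.eq_zero_or_pos Q1 with hQ1 | hQ1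
          · subst hQ1
            rw [if_pos (show P1 + 1 = 0 ∨ (0:ℕ) = 0 from Or.inr rfl), if_pos rfl, mul_one,
              zero_add]
            symm
            rw [Asum, Finset.sum_eq_single 0]
            · simp
            · intro r _ hr
              rw [show (0:ℕ) + 1 - 1 = 0 by omega,
                Nat.choose_eq_zero_of_lt (by omega : (0:ℕ) < r)]
              simp
            · intro h
              exact absurd (Finset.mem_range.2 (by omega)) h
          · obtain ⟨Q2, rfl⟩ : ∃ k, Q1 = k + 1 := ⟨Q1 - 1, by omega⟩
            rw [if_neg (by simp : ¬ (P1 + 1 = 0 ∨ Q2 + 1 = 0)), if_neg (Nat.succ_ne_zero Q2)]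
            rw [show Q2 + 1 + 1 = Q2 + 2 by omega]
            exact (Asum_id P1 Q2 z).symm
lemma negI_pow_even (r : ℕ) : (-Complex.I) ^ (2*r) = (-1)^r := by
  rw [pow_mul]
  norm_num [Complex.I_sq]

lemma I_mul_term_odd (u v : ℝ) (a b : ℕ) (r : ℕ) :
    Complex.I * ((a:ℂ) * (b:ℂ) * (-Complex.I * ((u:ℂ) * (v:ℂ))) ^ (2*r+1))
      = (((-1:ℝ)^r * (a:ℝ) * (b:ℝ) * (u*v)^(2*r+1) : ℝ) : ℂ) := by
  rw [mul_pow, pow_succ, pow_mul, show (-Complex.I)^2 = -1 by simp [pow_two]]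
  push_cast
  ring_nf
  simp [Complex.I_sq]

lemma I_mul_term_even (u v : ℝ) (a b : ℕ) (r : ℕ) :
    Complex.I * ((a:ℂ) * (b:ℂ) * (-Complex.I * ((u:ℂ) * (v:ℂ))) ^ (2*r+2))
      = (((-1:ℝ)^(r+1) * (a:ℝ) * (b:ℝ) * (u*v)^(2*r+2) : ℝ) : ℂ) * Complex.I := by
  rw [mul_pow, show 2*r+2 = 2*(r+1) by ring, pow_mul, show (-Complex.I)^2 = -1 by simp [pow_two]]
  push_cast
  ring

lemma sum_shrink {F : ℕ → ℝ} {M N : ℕ} (h : M ≤ N) (h0 : ∀ r, M ≤ r → F r = 0) :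
    ∑ r ∈ Finset.range N, F r = ∑ r ∈ Finset.range M, F r := by
  refine (Finset.sum_subset (Finset.range_subset_range.2 h) ?_).symm
  intro x hx hnx
  simp only [Finset.mem_range] at hx hnx
  exact h0 x (by omega)


/-- "Explicit" formula for the amplitudes in the model with mass (lattice coordinates). -/
theorem explicit_formula (m ε : ℝ) (hε : 0 < ε) (hm : 0 ≤ m) (x t : ℤ)
    (hxt : |x| < t) (hpar : Even (x + t)) :
    (am m ε x t).re =
      Real.sqrt (1 + m ^ 2 * ε ^ 2) ^ (1 - t) *
        ∑ r ∈ Finset.range (((t - |x|) / 2).toNat + 1),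
          (-1 : ℝ) ^ r * (((x + t - 2) / 2).toNat.choose r : ℝ) *
            (((t - x - 2) / 2).toNat.choose r : ℝ) * (m * ε) ^ (2 * r + 1) ∧
    (am m ε x t).im =
      Real.sqrt (1 + m ^ 2 * ε ^ 2) ^ (1 - t) *
        ∑ r ∈ Finset.Icc 1 (((t - |x|) / 2).toNat),
          (-1 : ℝ) ^ r * (((x + t - 2) / 2).toNat.choose r : ℝ) *
            (((t - x - 2) / 2).toNat.choose (r - 1) : ℝ) * (m * ε) ^ (2 * r) := by
  have hx2 : -t < x ∧ x < t := abs_lt.mp hxt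
  obtain ⟨k, hk⟩ := hpar
  obtain ⟨n, rfl⟩ : ∃ n : ℕ, t = ((n+1:ℕ) : ℤ) := ⟨(t-1).toNat, by omega⟩
  obtain ⟨p, hp⟩ : ∃ p : ℕ, (p:ℤ) = (x + ((n+1:ℕ):ℤ))/2 :=
    ⟨((x + ((n+1:ℕ):ℤ))/2).toNat, by omega⟩
  obtain ⟨q, hq⟩ : ∃ q : ℕ, (q:ℤ) = (((n+1:ℕ):ℤ) - x)/2 :=
    ⟨((((n+1:ℕ):ℤ) - x)/2).toNat, by omega⟩
  have hp1 : 1 ≤ p := by omega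
  have hq1 : 1 ≤ q := by omega
  have hpq : p + q = n + 1 := by omega
  have hxpq : ((p:ℤ) - q) = x := by omega
  -- the bound M
  set M := ((((n+1:ℕ):ℤ) - |x|) / 2).toNat with hMdef
  have hM : (M = p ∧ p ≤ q) ∨ (M = q ∧ q ≤ p) := by
    rcases le_or_gt 0 x with hx0 | hx0
    · right
      have habs : |x| = x := abs_of_nonneg hx0
      constructor
      · rw [hMdef, habs]; omega
      · omega
    · left
      have habs : |x| = -x := abs_of_neg hx0
      constructor
      · rw [hMdef, habs]; omega
      · omega
  have hMp : M ≤ p := by rcases hM with ⟨h1, h2⟩ | ⟨h1, h2⟩ <;> omega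
  have hMq : M ≤ q := by rcases hM with ⟨h1, h2⟩ | ⟨h1, h2⟩ <;> omega
  have hch1 : ((x + ((n+1:ℕ):ℤ) - 2) / 2).toNat = p - 1 := by omega
  have hch2 : ((((n+1:ℕ):ℤ) - x - 2) / 2).toNat = q - 1 := by omega
  -- amplitude computation
  obtain ⟨hgt, hgf⟩ := g_closed n p q hpq (-Complex.I * ((m:ℂ) * (ε:ℂ)))
  rw [hxpq] at hgt hgf
  rw [if_neg (by omega : ¬ p = 0), if_neg (by omega : ¬ q = 0)] at hgt
  rw [if_neg (by push_neg; omega : ¬ (p = 0 ∨ q = 0))] at hgf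
  have hsum := sum_cpaths_eq n x (-Complex.I * ((m:ℂ) * (ε:ℂ)))
  rw [hgt, hgf] at hsum
  set SA : ℝ := ∑ r ∈ Finset.range (p+q),
      (-1:ℝ)^r * ((p-1).choose r : ℝ) * ((q-1).choose r : ℝ) * (m*ε)^(2*r+1) with hSA
  set SB : ℝ := ∑ r ∈ Finset.range (p+q),
      (-1:ℝ)^(r+1) * ((p-1).choose (r+1) : ℝ) * ((q-1).choose r : ℝ) * (m*ε)^(2*r+2) with hSB
  set c : ℝ := Real.sqrt (1 + m^2*ε^2) ^ (1 - ((n+1:ℕ):ℤ)) with hc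
  have hIA : Complex.I * Asum p q (-Complex.I * ((m:ℂ) * (ε:ℂ))) = (SA : ℂ) := by
    rw [hSA, Asum, Finset.mul_sum, Complex.ofReal_sum]
    exact Finset.sum_congr rfl fun r _ => I_mul_term_odd m ε ((p-1).choose r) ((q-1).choose r) r
  have hIB : Complex.I * Bsum p q (-Complex.I * ((m:ℂ) * (ε:ℂ))) = (SB : ℂ) * Complex.I := by
    rw [hSB, Bsum, Finset.mul_sum, Complex.ofReal_sum, Finset.sum_mul]
    exact Finset.sum_congr rfl fun r _ =>
      I_mul_term_even m ε ((p-1).choose (r+1)) ((q-1).choose r) r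
  have ham : am m ε x ((n+1:ℕ):ℤ) = ↑(c * SA) + ↑(c * SB) * Complex.I := by
    simp only [am]
    rw [hsum, mul_assoc, mul_add, hIA, hIB, hc, ← Complex.ofReal_zpow]
    push_cast
    ring
  rw [ham]
  have hre : (↑(c * SA) + ↑(c * SB) * Complex.I).re = c * SA := by simp
  have him : (↑(c * SA) + ↑(c * SB) * Complex.I).im = c * SB := by simp
  rw [hre, him, hch1, hch2]
  constructor
  · rw [hc]
    congr 1
    rw [hSA]
    apply sum_shrink (by omega)
    intro r hr
    rcases hM with ⟨h1, h2⟩ | ⟨h1, h2⟩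
    · rw [Nat.choose_eq_zero_of_lt (show p - 1 < r by omega)]
      simp
    · rw [Nat.choose_eq_zero_of_lt (show q - 1 < r by omega)]
      simp
  · rw [hc]
    congr 1
    rw [← Finset.Ico_add_one_right_eq_Icc, Finset.sum_Ico_eq_sum_range]
    rw [hSB, sum_shrink (show M ≤ p + q by omega) ?van]
    case van =>
      intro r hr
      rcases hM with ⟨h1, h2⟩ | ⟨h1, h2⟩
      · rw [Nat.choose_eq_zero_of_lt (show p - 1 < r + 1 by omega)]
        simp
      · rw [Nat.choose_eq_zero_of_lt (show q - 1 < r by omega)]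
        simp
    apply Finset.sum_congr rfl
    intro i _
    rw [show 1 + i - 1 = i by omega, show 1 + i = i + 1 by omega,
      show 2 * (i + 1) = 2 * i + 2 by ring]
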